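/- Let g be a simple real Lie algebra and I a g-module such that I ≅ g as g-modules (I considered as an Abelian Lie algebra), and let h = g ⋉ I be the semidirect product. Let B : g → g* be the isomorphism induced by the Killing form, α : g → I a g-module isomorphism, and {bᵢ} a basis of g with dual basis {bᵢ*}. Then the balanced tensor ω = Σᵢ B⁻¹(bᵢ*) ⊗ α(bᵢ) + α(B⁻¹(bᵢ*)) ⊗ bᵢ ∈ h ⊗ h is h-invariant: [ω, x] = 0 for all x ∈ h, where h acts on h ⊗ h by derivations via the adjoint action. -/

import Mathlib

open scoped TensorProduct

section Aux

variable {G : Type*} [LieRing G] [LieAlgebra ℝ G] [FiniteDimensional ℝ G]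
  {ι : Type*} [Fintype ι] (b : Module.Basis ι ℝ G) (c : ι → G)

/-- contraction in the first slot against the killing form -/
noncomputable def contrK (u : G) : G ⊗[ℝ] G →ₗ[ℝ] G :=
  TensorProduct.lift ((LinearMap.lsmul ℝ G) ∘ₗ ((killingForm ℝ G).flip u))

lemma contrK_tmul (u x y : G) : contrK u (x ⊗ₜ[ℝ] y) = (killingForm ℝ G x u) • y := rfl

lemma eq_zero_of_contrK
    (hc : ∀ (i : ι) (x : G), killingForm ℝ G (c i) x = b.coord i x)
    (t : G ⊗[ℝ] G) (h : ∀ u : G, contrK u t = 0) : t = 0 := by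
  classical
  have key : ∀ (j k : ι) (s : G ⊗[ℝ] G),
      (b.tensorProduct b).repr s (j, k) = b.coord k (contrK (c j) s) := by
    intro j k
    have : ((b.tensorProduct b).coord (j, k) : G ⊗[ℝ] G →ₗ[ℝ] ℝ)
        = (b.coord k) ∘ₗ (contrK (c j)) := by
      apply TensorProduct.ext'
      intro x y
      simp only [Module.Basis.coord_apply, LinearMap.comp_apply, contrK_tmul,
        Module.Basis.tensorProduct_repr_tmul_apply, map_smul, smul_eq_mul]
      rw [LieModule.traceForm_comm, hc j x]
      simp [Module.Basis.coord_apply, mul_comm]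
    intro s
    have := congrArg (fun f : G ⊗[ℝ] G →ₗ[ℝ] ℝ => f s) this
    simpa [Module.Basis.coord_apply] using this
  have : (b.tensorProduct b).repr t = 0 := by
    ext p
    obtain ⟨j, k⟩ := p
    simp [key j k t, h (c j)]
  simpa using (b.tensorProduct b).repr.map_eq_zero_iff.mp this

lemma casimir_invariant
    (hc : ∀ (i : ι) (x : G), killingForm ℝ G (c i) x = b.coord i x)
    (y : G) :
    ∑ i : ι, (⁅c i, y⁆ ⊗ₜ[ℝ] b i + (c i) ⊗ₜ[ℝ] ⁅b i, y⁆) = 0 := by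
  apply eq_zero_of_contrK b c hc
  intro u
  rw [map_sum]
  have h1 : ∀ i : ι, contrK u (⁅c i, y⁆ ⊗ₜ[ℝ] b i + (c i) ⊗ₜ[ℝ] ⁅b i, y⁆)
      = (b.coord i ⁅y, u⁆) • b i + (b.coord i u) • ⁅b i, y⁆ := by
    intro i
    rw [map_add, contrK_tmul, contrK_tmul]
    rw [LieModule.traceForm_apply_lie_apply, hc, hc]
  rw [Finset.sum_congr rfl (fun i _ => h1 i), Finset.sum_add_distrib]
  have h3 : ∑ i : ι, (b.coord i u) • ⁅b i, y⁆ = ⁅u, y⁆ := by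
    have hb : ∀ i : ι, ⁅b i, y⁆ = -((LieAlgebra.ad ℝ G y) (b i)) := by
      intro i; rw [LieAlgebra.ad_apply, ← lie_skew]
    calc ∑ i : ι, (b.coord i u) • ⁅b i, y⁆
        = -((LieAlgebra.ad ℝ G y) (∑ i : ι, (b.coord i u) • b i)) := by
          rw [map_sum, ← Finset.sum_neg_distrib]
          exact Finset.sum_congr rfl (fun i _ => by rw [hb i, smul_neg, map_smul])
      _ = -((LieAlgebra.ad ℝ G y) u) := by
          congr 1; congr 1
          simpa [Module.Basis.coord_apply] using b.sum_repr u
      _ = ⁅u, y⁆ := by rw [LieAlgebra.ad_apply, lie_skew]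
  have h2' : ∑ i : ι, (b.coord i ⁅y, u⁆) • b i = ⁅y, u⁆ := by
    simpa [Module.Basis.coord_apply] using b.sum_repr ⁅y, u⁆
  rw [h2', h3, ← lie_skew u y, add_neg_cancel]

end Aux

/-- let `g` be a simple real Lie algebra, `I` a `g`-module isomorphic to
the adjoint module `g` (regarded as an Abelian Lie algebra), and `h = g ⋉ I` the
semidirect product (presented here by `fg : g → h`, `fv : I → h` with the semidirect
product bracket relations, jointly spanning `h`).  Let `B : g → g*` come from the
Killing form, `α : g ≅ I` a `g`-module isomorphism, `{bᵢ}` a basis of `g` with dual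
basis `{bᵢ*}`, and `c i = B⁻¹(bᵢ*)`.  Then the balanced tensor
`ω = Σᵢ B⁻¹(bᵢ*) ⊗ α(bᵢ) + α(B⁻¹(bᵢ*)) ⊗ bᵢ ∈ h ⊗ h` is `h`-invariant for the
derivation action `[u⊗v, x] = [u,x]⊗v + u⊗[v,x]`. -/
theorem balanced_tensor_invariant
    (G : Type*) [LieRing G] [LieAlgebra ℝ G] [FiniteDimensional ℝ G]
    [LieAlgebra.IsSimple ℝ G]
    (I : Type*) [AddCommGroup I] [Module ℝ I]
    [LieRingModule G I] [LieModule ℝ G I]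
    (α : G ≃ₗ[ℝ] I) (hα : ∀ (g x : G), α ⁅g, x⁆ = ⁅g, α x⁆)
    (H : Type*) [LieRing H] [LieAlgebra ℝ H]
    (fg : G →ₗ⁅ℝ⁆ H) (fv : I →ₗ[ℝ] H)
    (habelian : ∀ a b : I, ⁅fv a, fv b⁆ = 0)
    (hact : ∀ (g : G) (a : I), ⁅fg g, fv a⁆ = fv ⁅g, a⁆)
    (hspan : ∀ x : H, ∃ (g : G) (a : I), x = fg g + fv a)
    (ι : Type*) [Fintype ι] (b : Module.Basis ι ℝ G)
    (c : ι → G) (hc : ∀ (i : ι) (x : G), killingForm ℝ G (c i) x = b.coord i x)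
    (D : H → (H ⊗[ℝ] H →ₗ[ℝ] H ⊗[ℝ] H))
    (hD : ∀ (x u v : H), D x (u ⊗ₜ[ℝ] v) = ⁅u, x⁆ ⊗ₜ[ℝ] v + u ⊗ₜ[ℝ] ⁅v, x⁆) :
    ∀ x : H, D x (∑ i : ι,
      (fg (c i) ⊗ₜ[ℝ] fv (α (b i)) + fv (α (c i)) ⊗ₜ[ℝ] fg (b i))) = 0 := by
  intro x
  obtain ⟨g, a, rfl⟩ := hspan x
  obtain ⟨y, rfl⟩ := α.surjective a
  set x := fg g + fv (α y) with hx
  -- basic bracket relations in H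
  have hGG : ∀ u : G, ⁅fg u, fg g⁆ = fg ⁅u, g⁆ := fun u => (fg.map_lie u g).symm
  have hGV : ∀ u : G, ⁅fg u, fv (α y)⁆ = fv (α ⁅u, y⁆) := by
    intro u; rw [hact, ← hα]
  have hVG : ∀ v : G, ⁅fv (α v), fg g⁆ = fv (α ⁅v, g⁆) := by
    intro v
    rw [← lie_skew, hact, ← hα, ← lie_skew v g, map_neg, map_neg]
  -- linear maps H ⊗ H ← G ⊗ G
  set T1 : G ⊗[ℝ] G →ₗ[ℝ] H ⊗[ℝ] H :=
    TensorProduct.map (fg : G →ₗ[ℝ] H) (fv ∘ₗ (α : G →ₗ[ℝ] I)) with hT1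
  set T2 : G ⊗[ℝ] G →ₗ[ℝ] H ⊗[ℝ] H :=
    TensorProduct.map (fv ∘ₗ (α : G →ₗ[ℝ] I)) (fg : G →ₗ[ℝ] H) with hT2
  set T3 : G ⊗[ℝ] G →ₗ[ℝ] H ⊗[ℝ] H :=
    TensorProduct.map (fv ∘ₗ (α : G →ₗ[ℝ] I)) (fv ∘ₗ (α : G →ₗ[ℝ] I)) with hT3
  have key : ∀ i : ι,
      D x (fg (c i) ⊗ₜ[ℝ] fv (α (b i)) + fv (α (c i)) ⊗ₜ[ℝ] fg (b i))
      = T1 (⁅c i, g⁆ ⊗ₜ[ℝ] b i + (c i) ⊗ₜ[ℝ] ⁅b i, g⁆)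
        + T2 (⁅c i, g⁆ ⊗ₜ[ℝ] b i + (c i) ⊗ₜ[ℝ] ⁅b i, g⁆)
        + T3 (⁅c i, y⁆ ⊗ₜ[ℝ] b i + (c i) ⊗ₜ[ℝ] ⁅b i, y⁆) := by
    intro i
    rw [map_add, hD, hD, hx]
    simp only [lie_add, hGG, hGV, hVG, habelian, add_zero,
      hT1, hT2, hT3, map_add, TensorProduct.map_tmul, LinearMap.comp_apply,
      LinearMap.coe_coe, LieHom.coe_toLinearMap, LinearEquiv.coe_coe,
      TensorProduct.add_tmul, TensorProduct.tmul_add]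
    abel
  rw [map_sum, Finset.sum_congr rfl (fun i _ => key i), Finset.sum_add_distrib,
    Finset.sum_add_distrib, ← map_sum, ← map_sum, ← map_sum,
    casimir_invariant b c hc g, casimir_invariant b c hc y]
  simp
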